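/- Let (X,P,B) be an unbounded connected ballean. Then the following are equivalent: (i) X is thin; (ii) the identity map of X is an asymorphism from (X,P,B) to the point ideal ballean X_{♭(X)}, where ♭(X) is the ideal of all bounded subsets of X; (iii) every subset of X that is not thick is bounded; (iv) the subballean of exp(B) whose support is the family of all nonempty non-thick subsets of X is connected; (v) the map C : X → 𝒫(X), C(x) = X \ {x}, is injective and is an asymorphism from (X,P,B) onto the subballean of exp(B) on C(X) = {X \ {x} : x ∈ X}; (vi) every function f : X → {0,1} is slowly oscillating. -/

import Mathlib

open Set Cardinal

universe u v

variable {X : Type*} {Y : Type*} {P : Type*} {Q : Type*}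

/-- The ball around a set: `B(A, r) = ⋃_{y ∈ A} B(y, r)`. -/
def ballSet (B : X → P → Set X) (A : Set X) (r : P) : Set X := ⋃ y ∈ A, B y r

/-- `B : X → P → Set X` is the ball structure of a ballean with support `X` and radii `P`. -/
def IsBalleanBall (B : X → P → Set X) : Prop :=
  Nonempty P ∧ (∀ x r, x ∈ B x r) ∧ (∀ x y r, x ∈ B y r ↔ y ∈ B x r) ∧
    (∀ r s, ∃ t, ∀ x, ballSet B (B x r) s ⊆ B x t)

/-- A map between balleans is coarse. -/
def IsCoarse (BX : X → P → Set X) (BY : Y → Q → Set Y) (f : X → Y) : Prop :=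
  ∀ r, ∃ s, ∀ x, f '' BX x r ⊆ BY (f x) s

/-- A map between balleans is effectively proper. -/
def IsEffectivelyProper (BX : X → P → Set X) (BY : Y → Q → Set Y) (f : X → Y) : Prop :=
  ∀ s, ∃ r, ∀ x, f ⁻¹' BY (f x) s ⊆ BX x r

/-- A coarse embedding is a map that is both coarse and effectively proper. -/
def IsCoarseEmbedding (BX : X → P → Set X) (BY : Y → Q → Set Y) (f : X → Y) : Prop :=
  IsCoarse BX BY f ∧ IsEffectivelyProper BX BY f

/-- An asymorphism is a bijective map that is both coarse and effectively proper. -/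
def IsAsymorphism (BX : X → P → Set X) (BY : Y → Q → Set Y) (f : X → Y) : Prop :=
  Function.Bijective f ∧ IsCoarse BX BY f ∧ IsEffectivelyProper BX BY f

/-- A subset of a ballean is bounded. -/
def IsBoundedSet (B : X → P → Set X) (A : Set X) : Prop :=
  A = ∅ ∨ ∃ r, ∀ y ∈ A, A ⊆ B y r

/-- A subset of a ballean is large. -/
def IsLargeSet (B : X → P → Set X) (A : Set X) : Prop :=
  ∃ r, ballSet B A r = Set.univ

/-- A subset of a ballean is thick. -/
def IsThickSet (B : X → P → Set X) (A : Set X) : Prop :=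
  ∀ r, ∃ x ∈ A, B x r ⊆ A

/-- A subset of a ballean is thin. -/
def IsThinSet (B : X → P → Set X) (A : Set X) : Prop :=
  ∀ r, ∃ V : Set X, IsBoundedSet B V ∧ ∀ x ∈ A \ V, B x r ∩ A = {x}

/-- A `{0,1}`-valued function on a ballean is slowly oscillating. -/
def IsSlowlyOscillating (B : X → P → Set X) (f : X → Bool) : Prop :=
  ∀ r, ∃ V : Set X, IsBoundedSet B V ∧ ∀ x, x ∉ V → ∀ y ∈ B x r, ∀ z ∈ B x r, f y = f z

/-- A ballean is connected. -/
def IsConnectedBall (B : X → P → Set X) : Prop := ∀ x y, ∃ r, y ∈ B x r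

/-- The connected component of a point of a ballean. -/
def balleanComponent (B : X → P → Set X) (x : X) : Set X := {y | ∃ r, y ∈ B x r}

/-- The ball structure of the hyperballean `exp B`. -/
def expBall (B : X → P → Set X) : Set X → P → Set (Set X) :=
  fun A r => {C | A ⊆ ballSet B C r ∧ C ⊆ ballSet B A r}

/-- The ball structure of the subballean on a subset `S`. -/
def subBall (B : X → P → Set X) (S : Set X) : S → P → Set S :=
  fun y r => {z | (z : X) ∈ B (y : X) r}

/-- An ideal on a set `X`: a family of subsets closed under subsets and finite unions,
containing all finite sets, and not containing `X` itself. -/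
def IsIdeal (I : Set (Set X)) : Prop :=
  (∀ A ∈ I, ∀ B ⊆ A, B ∈ I) ∧ (∀ A ∈ I, ∀ B ∈ I, A ∪ B ∈ I) ∧
    (∀ A : Set X, A.Finite → A ∈ I) ∧ Set.univ ∉ I

/-- The ball structure of the point ideal ballean `X_I`:
`B_I(x,A) = {x}` if `x ∉ A` and `B_I(x,A) = {x} ∪ A` if `x ∈ A`. -/
def pointIdealBall (I : Set (Set X)) : X → I → Set X :=
  fun x A => insert x {y | y ∈ (A : Set X) ∧ x ∈ (A : Set X)}

/-- The ball structure of the `I`-ary ballean `X_{I-ary}`: `B(x,A) = {x} ∪ A`. -/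
def aryBall (I : Set (Set X)) : X → I → Set X :=
  fun x A => insert x (A : Set X)

/-- The ball structure of the ballean `C(X,I)` on `𝒫(X)`: `B_C(Z,K) = {W | Z △ W ⊆ K}`. -/
def cBall (I : Set (Set X)) : Set X → I → Set (Set X) :=
  fun Z K => {W | symmDiff Z W ⊆ (K : Set X)}

/-- The support of the flat hyperballean `X^♭`: all nonempty bounded subsets. -/
def flatSupport (B : X → P → Set X) : Set (Set X) := {A | A.Nonempty ∧ IsBoundedSet B A}


section AuxLemmas

variable {X : Type u} {P : Type v} {B : X → P → Set X}

lemma mem_ballSet_iff {A : Set X} {r : P} {w : X} :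
    w ∈ ballSet B A r ↔ ∃ v ∈ A, w ∈ B v r := by
  simp [ballSet]

lemma bsym (hB : IsBalleanBall B) {x y : X} {r : P} (h : x ∈ B y r) : y ∈ B x r :=
  (hB.2.2.1 x y r).mp h

lemma bself (hB : IsBalleanBall B) (x : X) (r : P) : x ∈ B x r := hB.2.1 x r

lemma bdirected (hB : IsBalleanBall B) (r s : P) :
    ∃ t, ∀ x, B x r ⊆ B x t ∧ B x s ⊆ B x t := by
  obtain ⟨t, ht⟩ := hB.2.2.2 r s
  refine ⟨t, fun x => ⟨fun y hy => ht x ?_, fun y hy => ht x ?_⟩⟩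
  · exact mem_ballSet_iff.mpr ⟨y, hy, bself hB y s⟩
  · exact mem_ballSet_iff.mpr ⟨x, bself hB x r, hy⟩

lemma bounded_subset {A A' : Set X} (h : IsBoundedSet B A') (hs : A ⊆ A') :
    IsBoundedSet B A := by
  rcases A.eq_empty_or_nonempty with h0 | ⟨a, ha⟩
  · exact Or.inl h0
  rcases h with h0 | ⟨r, hr⟩
  · exact absurd (h0 ▸ hs ha) (notMem_empty a)
  · exact Or.inr ⟨r, fun y hy => hs.trans (hr y (hs hy))⟩

lemma bounded_of_subset_ball (hB : IsBalleanBall B) {A : Set X} {x : X} {r : P}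
    (h : A ⊆ B x r) : IsBoundedSet B A := by
  obtain ⟨t, ht⟩ := hB.2.2.2 r r
  exact Or.inr ⟨t, fun y hy z hz =>
    ht y (mem_ballSet_iff.mpr ⟨x, bsym hB (h hy), h hz⟩)⟩

lemma exists_subset_ball (hB : IsBalleanBall B) {A : Set X} (hA : IsBoundedSet B A)
    {a : X} (ha : a ∈ A) : ∃ r, A ⊆ B a r := by
  rcases hA with h0 | ⟨r, hr⟩
  · exact absurd (h0 ▸ ha) (notMem_empty a)
  · exact ⟨r, hr a ha⟩

lemma bounded_union (hB : IsBalleanBall B) (hconn : IsConnectedBall B) {A C : Set X}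
    (hA : IsBoundedSet B A) (hC : IsBoundedSet B C) : IsBoundedSet B (A ∪ C) := by
  rcases A.eq_empty_or_nonempty with h0 | ⟨a, ha⟩
  · simpa [h0] using hC
  rcases C.eq_empty_or_nonempty with h0 | ⟨c, hc⟩
  · simpa [h0] using hA
  obtain ⟨r, hr⟩ := exists_subset_ball hB hA ha
  obtain ⟨s, hs⟩ := exists_subset_ball hB hC hc
  obtain ⟨u, hu⟩ := hconn a c
  obtain ⟨t1, ht1⟩ := hB.2.2.2 u s
  obtain ⟨t, ht⟩ := bdirected hB r t1
  refine bounded_of_subset_ball hB (A := A ∪ C) (x := a) (r := t) ?_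
  rintro z (hz | hz)
  · exact (ht a).1 (hr hz)
  · exact (ht a).2 (ht1 a (mem_ballSet_iff.mpr ⟨c, hu, hs hz⟩))

lemma bounded_ballSet (hB : IsBalleanBall B) {A : Set X} (hA : IsBoundedSet B A) (r : P) :
    IsBoundedSet B (ballSet B A r) := by
  rcases A.eq_empty_or_nonempty with h0 | ⟨a, ha⟩
  · subst h0; exact Or.inl (by simp [ballSet])
  obtain ⟨s, hs⟩ := exists_subset_ball hB hA ha
  obtain ⟨t, ht⟩ := hB.2.2.2 s r
  refine bounded_of_subset_ball hB (x := a) (r := t) ?_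
  intro z hz
  obtain ⟨v, hv, hzv⟩ := mem_ballSet_iff.mp hz
  exact ht a (mem_ballSet_iff.mpr ⟨v, hs hv, hzv⟩)

lemma exists_not_mem {A V : Set X} (hA : ¬ IsBoundedSet B A) (hV : IsBoundedSet B V) :
    ∃ a ∈ A, a ∉ V := by
  by_contra h
  push_neg at h
  exact hA (bounded_subset hV h)

/-- Key construction: if `X` is not thin, there is an unbounded set `M` and a choice
`y x ∈ B x r`, `y x ≠ x` for `x ∈ M`, with no `y x` landing in `M`. -/
lemma exists_unbounded_M (hB : IsBalleanBall B) (hconn : IsConnectedBall B)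
    (hnt : ¬ IsThinSet B Set.univ) :
    ∃ (r : P) (M : Set X) (y : X → X), ¬ IsBoundedSet B M ∧
      (∀ x ∈ M, y x ∈ B x r ∧ y x ≠ x) ∧ (∀ x ∈ M, ∀ x' ∈ M, y x ≠ x') := by
  classical
  unfold IsThinSet at hnt
  push_neg at hnt
  obtain ⟨r, hr⟩ := hnt
  set y : X → X := fun x => if h : ∃ z, z ∈ B x r ∧ z ≠ x then h.choose else x with hy
  have hyspec : ∀ x : X, B x r ≠ {x} → y x ∈ B x r ∧ y x ≠ x := by
    intro x hx
    have h : ∃ z, z ∈ B x r ∧ z ≠ x := by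
      by_contra hc
      push_neg at hc
      exact hx (Subset.antisymm (fun z hz => hc z hz)
        (singleton_subset_iff.mpr (bself hB x r)))
    simp only [hy, dif_pos h]
    exact h.choose_spec
  set D : Set X := {x | B x r ≠ {x}} with hD
  have hrD : ∀ V : Set X, IsBoundedSet B V → ∃ a, a ∈ D ∧ a ∉ V := by
    intro V hV
    obtain ⟨x, hx1, hx2⟩ := hr V hV
    exact ⟨x, by simpa [hD] using hx2, hx1.2⟩
  set S : Set (Set X) := {M | M ⊆ D ∧ ∀ x ∈ M, ∀ x' ∈ M, y x ≠ x'} with hS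
  obtain ⟨M, hM⟩ := zorn_subset S (by
    intro c hc hchain
    refine ⟨⋃₀ c, ⟨?_, ?_⟩, fun s hs => subset_sUnion_of_mem hs⟩
    · exact sUnion_subset fun m hm => (hc hm).1
    · rintro x hx x' hx'
      obtain ⟨m, hm, hxm⟩ := hx
      obtain ⟨m', hm', hxm'⟩ := hx'
      rcases eq_or_ne m m' with h | h
      · exact (hc hm).2 x hxm x' (h ▸ hxm')
      · rcases hchain hm hm' h with hle | hle
        · exact (hc hm').2 x (hle hxm) x' hxm'
        · exact (hc hm).2 x hxm x' (hle hxm'))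
  refine ⟨r, M, y, ?_, fun x hx => hyspec x (hM.1.1 hx), hM.1.2⟩
  intro hbdd
  have hVb : IsBoundedSet B (M ∪ ballSet B M r) :=
    bounded_union hB hconn hbdd (bounded_ballSet hB hbdd r)
  obtain ⟨a, haD, haV⟩ := hrD _ hVb
  have hins : insert a M ∈ S := by
    constructor
    · exact insert_subset haD hM.1.1
    · intro x hxm x' hxm'
      rcases mem_insert_iff.mp hxm with hxa | hx <;>
        rcases mem_insert_iff.mp hxm' with hxa' | hx'
      · rw [hxa, hxa']
        exact (hyspec a haD).2
      · rw [hxa]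
        intro h
        apply haV
        exact Or.inr (mem_ballSet_iff.mpr ⟨x', hx', h ▸ bsym hB (hyspec a haD).1⟩)
      · rw [hxa']
        intro h
        apply haV
        rw [← h]
        exact Or.inr (mem_ballSet_iff.mpr ⟨x, hx, (hyspec x (hM.1.1 hx)).1⟩)
      · exact hM.1.2 x hx x' hx'
  have : insert a M ⊆ M := hM.2 hins (subset_insert a M)
  exact haV (Or.inl (this (mem_insert a M)))

lemma exists_ne_of_ball_ne {x : X} {s : P} (hB : IsBalleanBall B) (h : B x s ≠ {x}) :
    ∃ z ∈ B x s, z ≠ x := by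
  by_contra hc
  push_neg at hc
  exact h (Subset.antisymm (fun z hz => hc z hz) (singleton_subset_iff.mpr (bself hB x s)))

lemma compl_subset_ballSet_compl_iff (hB : IsBalleanBall B) {x y : X} {s : P} :
    ({x}ᶜ : Set X) ⊆ ballSet B ({y}ᶜ) s ↔ ¬ (y ≠ x ∧ B y s = {y}) := by
  constructor
  · rintro h ⟨hne, hb⟩
    have hy : y ∈ ({x}ᶜ : Set X) := by simpa using hne
    obtain ⟨v, hv, hyv⟩ := mem_ballSet_iff.mp (h hy)
    have : v ∈ B y s := bsym hB hyv
    rw [hb] at this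
    exact hv this
  · intro h w hw
    rcases eq_or_ne w y with rfl | hwy
    · have hb : B w s ≠ {w} := fun hb => h ⟨by simpa using hw, hb⟩
      obtain ⟨z, hz, hzw⟩ := exists_ne_of_ball_ne hB hb
      exact mem_ballSet_iff.mpr ⟨z, by simpa using hzw, bsym hB hz⟩
    · exact mem_ballSet_iff.mpr ⟨w, by simpa using hwy, bself hB w s⟩

lemma compl_mem_expBall_compl_iff (hB : IsBalleanBall B) {x y : X} {s : P} :
    ({y}ᶜ : Set X) ∈ expBall B ({x}ᶜ) s ↔ (x = y ∨ (B x s ≠ {x} ∧ B y s ≠ {y})) := by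
  constructor
  · rintro ⟨h1, h2⟩
    rcases eq_or_ne x y with rfl | hne
    · exact Or.inl rfl
    refine Or.inr ⟨?_, ?_⟩
    · intro hb
      exact (compl_subset_ballSet_compl_iff hB).mp h2 ⟨hne, hb⟩
    · intro hb
      exact (compl_subset_ballSet_compl_iff hB).mp h1 ⟨hne.symm, hb⟩
  · rintro (rfl | ⟨hx, hy⟩)
    · constructor <;>
      · apply (compl_subset_ballSet_compl_iff hB).mpr
        rintro ⟨hne, _⟩
        exact hne rfl
    · exact ⟨(compl_subset_ballSet_compl_iff hB).mpr fun h => hy h.2,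
        (compl_subset_ballSet_compl_iff hB).mpr fun h => hx h.2⟩

end AuxLemmas

/-- Characterisation of thin connected unbounded balleans: thinness is equivalent to
(ii) coinciding (via `id`) with the satellite point ideal ballean of the ideal of bounded sets,
(iii) every non-thick subset being bounded, (iv) connectedness of the subballean of `exp B`
on the nonempty non-thick subsets, (v) `C : x ↦ X \ {x}` being injective and an asymorphism
onto its image, and (vi) every `f : X → {0,1}` being slowly oscillating. -/
theorem stmt2 {X : Type u} {P : Type v} (B : X → P → Set X) (hB : IsBalleanBall B)
    (hconn : IsConnectedBall B) (hunb : ¬ IsBoundedSet B Set.univ) :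
    List.TFAE [
      IsThinSet B Set.univ,
      IsAsymorphism B (pointIdealBall {V : Set X | IsBoundedSet B V}) (id : X → X),
      ∀ A : Set X, ¬ IsThickSet B A → IsBoundedSet B A,
      IsConnectedBall (subBall (expBall B) {A : Set X | A.Nonempty ∧ ¬ IsThickSet B A}),
      Function.Injective (fun x : X => ({x}ᶜ : Set X)) ∧
        IsAsymorphism B (subBall (expBall B) (Set.range fun x : X => ({x}ᶜ : Set X)))
          (fun x : X => ⟨({x}ᶜ : Set X), ⟨x, rfl⟩⟩),
      ∀ f : X → Bool, IsSlowlyOscillating B f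
    ] := by
  classical
  obtain ⟨r0⟩ := hB.1
  have thin_iff : IsThinSet B Set.univ ↔
      ∀ r, ∃ V, IsBoundedSet B V ∧ ∀ x ∉ V, B x r = {x} := by
    constructor
    · intro h r
      obtain ⟨V, hV, h2⟩ := h r
      exact ⟨V, hV, fun x hx => by simpa using h2 x ⟨mem_univ x, hx⟩⟩
    · intro h r
      obtain ⟨V, hV, h2⟩ := h r
      exact ⟨V, hV, fun x hx => by simp [h2 x hx.2]⟩
  tfae_have h12 : 1 → 2 := by
    intro h1
    refine ⟨Function.bijective_id, ?_, ?_⟩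
    · intro r
      obtain ⟨V, hV, hVr⟩ := thin_iff.mp h1 r
      have hW : IsBoundedSet B (V ∪ ballSet B V r) :=
        bounded_union hB hconn hV (bounded_ballSet hB hV r)
      refine ⟨⟨V ∪ ballSet B V r, hW⟩, fun x z hz => ?_⟩
      rw [image_id] at hz
      simp only [pointIdealBall, id_eq, mem_insert_iff, mem_setOf_eq]
      by_cases hx : x ∈ V
      · exact Or.inr ⟨Or.inr (mem_ballSet_iff.mpr ⟨x, hx, hz⟩), Or.inl hx⟩
      · rw [hVr x hx] at hz
        exact Or.inl hz
    · intro A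
      have hA2 : IsBoundedSet B (A : Set X) := A.2
      rcases hA2 with h0 | ⟨s, hs⟩
      · refine ⟨r0, fun x z hz => ?_⟩
        simp only [preimage_id, id_eq, pointIdealBall, mem_insert_iff, mem_setOf_eq,
          h0, mem_empty_iff_false, false_and, and_false, or_false] at hz
        rw [hz]
        exact bself hB x r0
      · refine ⟨s, fun x z hz => ?_⟩
        simp only [preimage_id, id_eq, pointIdealBall, mem_insert_iff, mem_setOf_eq] at hz
        rcases hz with h | ⟨hzA, hxA⟩
        · rw [h]
          exact bself hB x s
        · exact hs x hxA hzA
  tfae_have h21 : 2 → 1 := by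
    intro h2
    rw [thin_iff]
    intro r
    obtain ⟨A, hA⟩ := h2.2.1 r
    refine ⟨(A : Set X), A.2, fun x hx => ?_⟩
    refine Subset.antisymm ?_ (singleton_subset_iff.mpr (bself hB x r))
    intro z hz
    have hz' := hA x (mem_image_of_mem id hz)
    simp only [pointIdealBall, id_eq, mem_insert_iff, mem_setOf_eq] at hz'
    rcases hz' with h | ⟨_, hxA⟩
    · exact mem_singleton_iff.mpr h
    · exact absurd hxA hx
  tfae_have h13 : 1 → 3 := by
    intro h1 A hA
    unfold IsThickSet at hA
    push_neg at hA
    obtain ⟨s, hs⟩ := hA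
    obtain ⟨V, hV, hVr⟩ := thin_iff.mp h1 s
    refine bounded_subset hV ?_
    intro a ha
    by_contra haV
    exact hs a ha (by rw [hVr a haV]; exact singleton_subset_iff.mpr ha)
  tfae_have h31 : 3 → 1 := by
    intro h3
    by_contra h1
    obtain ⟨r, M, y, hMub, hy, hyM⟩ := exists_unbounded_M hB hconn h1
    apply hMub
    apply h3
    intro hthick
    obtain ⟨x, hxM, hsub⟩ := hthick r
    exact hyM x hxM (y x) (hsub (hy x hxM).1) rfl
  tfae_have h14 : 1 → 4 := by
    intro h1
    have h3 := h13 h1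
    intro A C
    have hA2 : (A : Set X).Nonempty ∧ ¬ IsThickSet B (A : Set X) := A.2
    have hC2 : (C : Set X).Nonempty ∧ ¬ IsThickSet B (C : Set X) := C.2
    obtain ⟨a, ha⟩ := hA2.1
    obtain ⟨c, hc⟩ := hC2.1
    obtain ⟨rA, hrA⟩ := exists_subset_ball hB (h3 _ hA2.2) ha
    obtain ⟨rC, hrC⟩ := exists_subset_ball hB (h3 _ hC2.2) hc
    obtain ⟨u1, hu1⟩ := hconn c a
    obtain ⟨u2, hu2⟩ := hconn a c
    obtain ⟨t1, ht1⟩ := hB.2.2.2 u1 rA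
    obtain ⟨t2, ht2⟩ := hB.2.2.2 u2 rC
    obtain ⟨t, ht⟩ := bdirected hB t1 t2
    refine ⟨t, show (A : Set X) ⊆ ballSet B (C : Set X) t ∧
      (C : Set X) ⊆ ballSet B (A : Set X) t from ⟨?_, ?_⟩⟩
    · intro z hz
      have hzc : z ∈ B c t := (ht c).1 (ht1 c (mem_ballSet_iff.mpr ⟨a, hu1, hrA hz⟩))
      exact mem_ballSet_iff.mpr ⟨c, hc, hzc⟩
    · intro z hz
      have hza : z ∈ B a t := (ht a).2 (ht2 a (mem_ballSet_iff.mpr ⟨c, hu2, hrC hz⟩))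
      exact mem_ballSet_iff.mpr ⟨a, ha, hza⟩
  tfae_have h41 : 4 → 1 := by
    intro h4
    by_contra h1
    obtain ⟨r, M, y, hMub, hy, hyM⟩ := exists_unbounded_M hB hconn h1
    have hXne : (Set.univ : Set X).Nonempty := by
      rcases (Set.univ : Set X).eq_empty_or_nonempty with h | h
      · exact absurd (Or.inl h) hunb
      · exact h
    obtain ⟨x0, -⟩ := hXne
    have hx0nt : ¬ IsThickSet B ({x0} : Set X) := by
      intro ht
      apply hunb
      have key : ∀ z : X, z = x0 := by
        intro z
        obtain ⟨s, hsz⟩ := hconn x0 z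
        obtain ⟨x, hx, hsub⟩ := ht s
        have hxx : x = x0 := mem_singleton_iff.mp hx
        have hsub' : B x0 s ⊆ {x0} := by rwa [hxx] at hsub
        exact mem_singleton_iff.mp (hsub' hsz)
      refine Or.inr ⟨r0, fun v _ z _ => ?_⟩
      rw [key z, key v]
      exact bself hB x0 r0
    have hMnt : ¬ IsThickSet B M := by
      intro ht
      obtain ⟨x, hxM, hsub⟩ := ht r
      exact hyM x hxM (y x) (hsub (hy x hxM).1) rfl
    have hMne : M.Nonempty := by
      rcases M.eq_empty_or_nonempty with h | h
      · exact absurd (Or.inl h) hMub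
      · exact h
    obtain ⟨t, hC⟩ := h4 ⟨({x0} : Set X), ⟨singleton_nonempty x0, hx0nt⟩⟩ ⟨M, ⟨hMne, hMnt⟩⟩
    have hC' : ({x0} : Set X) ⊆ ballSet B M t ∧ M ⊆ ballSet B ({x0} : Set X) t := hC
    refine hMub (bounded_of_subset_ball hB (x := x0) (r := t) ?_)
    intro z hz
    obtain ⟨v, hv, hzv⟩ := mem_ballSet_iff.mp (hC'.2 hz)
    rwa [mem_singleton_iff.mp hv] at hzv
  tfae_have h15 : 1 → 5 := by
    intro h1
    refine ⟨fun a b h => ?_, ⟨?_, ?_⟩, ?_, ?_⟩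
    · simpa using h
    · intro a b h
      have h' : ({a}ᶜ : Set X) = ({b}ᶜ : Set X) := congrArg Subtype.val h
      simpa using h'
    · rintro ⟨A, x, hx⟩
      exact ⟨x, Subtype.ext hx⟩
    · intro r
      refine ⟨r, fun x => ?_⟩
      rintro w ⟨z, hz, rfl⟩
      show ({z}ᶜ : Set X) ∈ expBall B ({x}ᶜ) r
      apply (compl_mem_expBall_compl_iff hB).mpr
      rcases eq_or_ne x z with h | hne
      · exact Or.inl h
      · refine Or.inr ⟨fun hb => hne ?_, fun hb => hne ?_⟩
        · rw [hb] at hz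
          exact (mem_singleton_iff.mp hz).symm
        · have hx' : x ∈ B z r := bsym hB hz
          rw [hb] at hx'
          exact mem_singleton_iff.mp hx'
    · intro s
      obtain ⟨V, hV, hVs⟩ := thin_iff.mp h1 s
      rcases hV with h0 | ⟨u, hu⟩
      · refine ⟨r0, fun x z hz => ?_⟩
        have hm : ({z}ᶜ : Set X) ∈ expBall B ({x}ᶜ) s := hz
        rcases (compl_mem_expBall_compl_iff hB).mp hm with heq | ⟨hbx, _⟩
        · rw [← heq]
          exact bself hB x r0
        · exact absurd (hVs x (by simp [h0])) hbx
      · refine ⟨u, fun x z hz => ?_⟩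
        have hm : ({z}ᶜ : Set X) ∈ expBall B ({x}ᶜ) s := hz
        rcases (compl_mem_expBall_compl_iff hB).mp hm with heq | ⟨hbx, hbz⟩
        · rw [← heq]
          exact bself hB x u
        · have hxV : x ∈ V := by by_contra h; exact hbx (hVs x h)
          have hzV : z ∈ V := by by_contra h; exact hbz (hVs z h)
          exact hu x hxV hzV
  tfae_have h51 : 5 → 1 := by
    intro h5
    rw [thin_iff]
    intro s
    obtain ⟨r, hr⟩ := h5.2.2.2 s
    refine ⟨{x | B x s ≠ {x}}, Or.inr ⟨r, fun x hxD z hzD => ?_⟩, fun x hx => not_not.mp hx⟩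
    apply hr x
    show ({z}ᶜ : Set X) ∈ expBall B ({x}ᶜ) s
    exact (compl_mem_expBall_compl_iff hB).mpr (Or.inr ⟨hxD, hzD⟩)
  tfae_have h16 : 1 → 6 := by
    intro h1 f r
    obtain ⟨V, hV, hVr⟩ := thin_iff.mp h1 r
    refine ⟨V, hV, fun x hx w hw z hz => ?_⟩
    rw [hVr x hx] at hw hz
    rw [mem_singleton_iff.mp hw, mem_singleton_iff.mp hz]
  tfae_have h61 : 6 → 1 := by
    intro h6
    by_contra h1
    obtain ⟨r, M, y, hMub, hy, hyM⟩ := exists_unbounded_M hB hconn h1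
    obtain ⟨V, hV, hVf⟩ := h6 (fun z => decide (z ∈ y '' M)) r
    obtain ⟨x, hxM, hxV⟩ := exists_not_mem hMub hV
    have h := hVf x hxV (y x) (hy x hxM).1 x (bself hB x r)
    have h1' : y x ∈ y '' M := ⟨x, hxM, rfl⟩
    have h2' : x ∉ y '' M := by
      rintro ⟨x', hx', he⟩
      exact hyM x' hx' x hxM he
    simp [h1', h2'] at h
  tfae_finish
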